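/- Let G be a Hausdorff topological group and K a compact normal subgroup of G. Then G is compactly presented if and only if the quotient group G/K is compactly presented. -/

import Mathlib

open scoped Pointwise

/-- A group `G` is *boundedly presented* by a subset `S ⊆ G` if there are an integer `n` and a
set `R` of words of length at most `n` in the letters `S ∪ S⁻¹`, each representing the identity
in `G`, such that the canonical homomorphism from the quotient of the free group on `S` by the
normal closure of `R` onto `G` is an isomorphism. -/
def BoundedlyPresentedBy (G : Type*) [Group G] (S : Set G) : Prop :=
  ∃ (n : ℕ) (R : Set (FreeGroup S)),
    (∀ r ∈ R, ∃ w : List (S × Bool), FreeGroup.mk w = r ∧ w.length ≤ n) ∧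
    Function.Surjective (FreeGroup.lift (fun s : S => (s : G))) ∧
    MonoidHom.ker (FreeGroup.lift (fun s : S => (s : G))) = Subgroup.normalClosure R

/-- A topological group is *compactly presented* if it is boundedly presented by some compact
subset. -/
def CompactlyPresented (G : Type*) [Group G] [TopologicalSpace G] : Prop :=
  ∃ S : Set G, IsCompact S ∧ BoundedlyPresentedBy G S

namespace CPAux

theorem exists_word {α : Type*} (x : FreeGroup α) : ∃ w, FreeGroup.mk w = x := by
  obtain ⟨w, hw⟩ := Quot.exists_rep x
  exact ⟨w, by rw [← FreeGroup.quot_mk_eq_mk]; exact hw⟩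

theorem of_eq_mk {α : Type*} (a : α) : FreeGroup.of a = FreeGroup.mk [(a, true)] := rfl

theorem inv_of_eq_mk {α : Type*} (a : α) :
    (FreeGroup.of a)⁻¹ = FreeGroup.mk [(a, false)] := by
  rw [of_eq_mk, FreeGroup.inv_mk]; rfl

theorem mk_cons {α : Type*} (p : α × Bool) (w : List (α × Bool)) :
    FreeGroup.mk (p :: w) = FreeGroup.mk [p] * FreeGroup.mk w := by
  rw [FreeGroup.mul_mk]; rfl

section Forward

variable {G : Type*} [Group G] [TopologicalSpace G] [IsTopologicalGroup G] [T2Space G]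

theorem forward (K : Subgroup G) [K.Normal] (hK : IsCompact (K : Set G)) :
    CompactlyPresented G → CompactlyPresented (G ⧸ K) := by
  rintro ⟨S, hS, n, R, hR, hsurj, hker⟩
  let π : G →* G ⧸ K := QuotientGroup.mk' K
  have hπc : Continuous π := QuotientGroup.continuous_mk
  let T : Set (G ⧸ K) := π '' S
  refine ⟨T, hS.image hπc, ?_⟩
  let φ : FreeGroup S →* G := FreeGroup.lift (fun s : S => (s : G))
  let ψ : FreeGroup T →* G ⧸ K := FreeGroup.lift (fun t : T => (t : G ⧸ K))
  let ρl : S → T := fun s => ⟨π s, Set.mem_image_of_mem _ s.2⟩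
  let ρh : FreeGroup S →* FreeGroup T := FreeGroup.map ρl
  have hτ : ∀ t : T, ∃ s : S, π s = (t : G ⧸ K) := fun t => by
    obtain ⟨s, hs, hst⟩ := t.2; exact ⟨⟨s, hs⟩, hst⟩
  choose τl hτl using hτ
  let σh : FreeGroup T →* FreeGroup S := FreeGroup.map τl
  have hρσ : ∀ y : FreeGroup T, ρh (σh y) = y := by
    intro y
    have h : ρh.comp σh = MonoidHom.id _ := by
      refine FreeGroup.ext_hom _ _ fun t => ?_
      show ρh (FreeGroup.map τl (FreeGroup.of t)) = FreeGroup.of t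
      rw [FreeGroup.map.of]
      show FreeGroup.map ρl (FreeGroup.of (τl t)) = FreeGroup.of t
      rw [FreeGroup.map.of]
      exact congrArg FreeGroup.of (Subtype.ext (hτl t))
    have := DFunLike.congr_fun h y
    simpa using this
  have hcomm : ∀ x : FreeGroup S, ψ (ρh x) = π (φ x) := by
    intro x
    have h : ψ.comp ρh = π.comp φ := by
      refine FreeGroup.ext_hom _ _ fun s => ?_
      show ψ (FreeGroup.map ρl (FreeGroup.of s)) = π (φ (FreeGroup.of s))
      rw [FreeGroup.map.of]
      show ψ (FreeGroup.of (ρl s)) = π (φ (FreeGroup.of s))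
      show FreeGroup.lift _ (FreeGroup.of (ρl s)) = π (FreeGroup.lift _ (FreeGroup.of s))
      rw [FreeGroup.lift_apply_of]
      try rw [FreeGroup.lift_apply_of]
      try rfl
    exact DFunLike.congr_fun h x
  -- the balls
  let C : Set G := S ∪ S⁻¹ ∪ {1}
  have hC : IsCompact C := (hS.union hS.inv).union isCompact_singleton
  have hCone : (1 : G) ∈ C := Or.inr rfl
  have hCpow : ∀ m : ℕ, IsCompact (C ^ m) := by
    intro m; induction m with
    | zero => rw [pow_zero]; exact isCompact_singleton
    | succ m ih => rw [pow_succ]; exact ih.mul hC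
  have hstep : ∀ m : ℕ, C ^ m ⊆ C ^ (m + 1) := fun m x hx => by
    rw [pow_succ]
    have := Set.mul_mem_mul hx hCone
    rwa [mul_one] at this
  have hCmono : ∀ m m' : ℕ, m ≤ m' → C ^ m ⊆ C ^ m' := by
    intro m m' h
    induction h with
    | refl => exact subset_rfl
    | step _ ih => exact ih.trans (hstep _)
  have hletter : ∀ p : S × Bool, φ (FreeGroup.mk [p]) ∈ C := by
    rintro ⟨s, b⟩
    have : φ (FreeGroup.mk [(s, b)]) = cond b (s : G) (s : G)⁻¹ := by
      show FreeGroup.lift _ (FreeGroup.mk [(s, b)]) = _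
      rw [FreeGroup.lift_mk]
      simp
    rw [this]
    cases b with
    | true => exact Or.inl (Or.inl s.2)
    | false => exact Or.inl (Or.inr (Set.inv_mem_inv.mpr s.2))
  have hword_mem : ∀ w : List (S × Bool), φ (FreeGroup.mk w) ∈ C ^ w.length := by
    intro w
    induction w with
    | nil =>
      have h1 : FreeGroup.mk ([] : List (S × Bool)) = 1 := rfl
      rw [h1, map_one, List.length_nil, pow_zero]
      exact Set.mem_one.mpr rfl
    | cons p w ih =>
      rw [mk_cons, map_mul, List.length_cons, pow_succ']
      exact Set.mul_mem_mul (hletter p) ih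
  have hcover : ∀ g : G, ∃ m, g ∈ C ^ m := by
    intro g
    obtain ⟨x, rfl⟩ := hsurj g
    obtain ⟨w, rfl⟩ := exists_word x
    exact ⟨w.length, hword_mem w⟩
  have hball_word : ∀ m : ℕ, ∀ g ∈ C ^ m,
      ∃ w : List (S × Bool), w.length ≤ m ∧ φ (FreeGroup.mk w) = g := by
    intro m
    induction m with
    | zero =>
      intro g hg
      rw [pow_zero] at hg
      refine ⟨[], le_rfl, ?_⟩
      rw [Set.mem_one.mp hg]
      rfl
    | succ m ih =>
      intro g hg
      rw [pow_succ] at hg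
      obtain ⟨h, hh, c, hc, rfl⟩ := hg
      obtain ⟨w, hwl, hwφ⟩ := ih h hh
      rcases hc with (hc | hc) | hc
      · refine ⟨w ++ [(⟨c, hc⟩, true)], ?_, ?_⟩
        · simpa using Nat.add_le_add_right hwl 1
        · rw [← FreeGroup.mul_mk, map_mul, hwφ]
          congr 1
          have := hletter (⟨c, hc⟩, true)
          show φ (FreeGroup.mk [((⟨c, hc⟩ : S), true)]) = c
          show FreeGroup.lift _ (FreeGroup.mk [((⟨c, hc⟩ : S), true)]) = c
          rw [FreeGroup.lift_mk]; simp
      · refine ⟨w ++ [(⟨c⁻¹, Set.mem_inv.mp hc⟩, false)], ?_, ?_⟩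
        · simpa using Nat.add_le_add_right hwl 1
        · rw [← FreeGroup.mul_mk, map_mul, hwφ]
          congr 1
          show FreeGroup.lift _ (FreeGroup.mk [((⟨c⁻¹, _⟩ : S), false)]) = c
          rw [FreeGroup.lift_mk]; simp
      · refine ⟨w, hwl.trans (Nat.le_succ m), ?_⟩
        rw [Set.eq_of_mem_singleton hc]
        show φ (FreeGroup.mk w) = h * 1
        rw [mul_one]
        exact hwφ
  -- Baire: K is contained in some ball
  have hKsub : ∃ L : ℕ, (K : Set G) ⊆ C ^ L := by
    haveI : CompactSpace K := isCompact_iff_compactSpace.mp hK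
    haveI : Nonempty K := ⟨1⟩
    have hclosed : ∀ m : ℕ, IsClosed ((fun k : K => (k : G)) ⁻¹' (C ^ m)) := fun m =>
      ((hCpow m).isClosed).preimage continuous_subtype_val
    have hunion : (⋃ m : ℕ, ((fun k : K => (k : G)) ⁻¹' (C ^ m))) = Set.univ := by
      ext k
      simp only [Set.mem_iUnion, Set.mem_univ, iff_true, Set.mem_preimage]
      exact hcover k
    obtain ⟨m, hm⟩ := nonempty_interior_of_iUnion_of_closed hclosed hunion
    obtain ⟨k₀, hk₀⟩ := hm
    obtain ⟨t, hts, hto, hk₀t⟩ := mem_interior.mp hk₀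
    obtain ⟨V, hV, rfl⟩ := isOpen_induced_iff.mp hto
    have hk₀V : (k₀ : G) ∈ V := hk₀t
    have hk₀C : (k₀ : G) ∈ C ^ m := hts hk₀t
    have hKV : ∀ g : G, g ∈ K → g ∈ V → g ∈ C ^ m := fun g hg hgV =>
      hts (show (⟨g, hg⟩ : K) ∈ _ from hgV)
    have hKcover : (K : Set G) ⊆ ⋃ k : K, ((k : G) * (k₀ : G)⁻¹) • V := by
      intro g hg
      refine Set.mem_iUnion.mpr ⟨⟨g, hg⟩, ?_⟩
      refine Set.mem_smul_set.mpr ⟨(k₀ : G), hk₀V, ?_⟩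
      show (g : G) * (k₀ : G)⁻¹ * (k₀ : G) = g
      group
    obtain ⟨fin, hfin⟩ := hK.elim_finite_subcover
      (fun k : K => ((k : G) * (k₀ : G)⁻¹) • V) (fun k => hV.smul _) hKcover
    choose mfun hmfun using fun k : K => hcover (k : G)
    set M : ℕ := fin.sup mfun with hM
    -- symmetry of C
    have hCsymm : ∀ x ∈ C, x⁻¹ ∈ C := by
      rintro x ((h | h) | h)
      · exact Or.inl (Or.inr (Set.inv_mem_inv.mpr h))
      · exact Or.inl (Or.inl (Set.mem_inv.mp h))
      · refine Or.inr ?_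
        rw [Set.eq_of_mem_singleton h, inv_one]
        rfl
    have hpowinv : ∀ m : ℕ, ∀ x ∈ C ^ m, x⁻¹ ∈ C ^ m := by
      intro m
      induction m with
      | zero =>
        intro x hx
        rw [pow_zero] at *
        rw [Set.mem_one.mp hx, inv_one]
        exact Set.mem_one.mpr rfl
      | succ m ih =>
        intro x hx
        rw [pow_succ] at hx
        obtain ⟨a, ha, b, hb, rfl⟩ := hx
        rw [mul_inv_rev, pow_succ']
        exact Set.mul_mem_mul (hCsymm b hb) (ih a ha)
    refine ⟨M + m + m, fun g hg => ?_⟩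
    obtain ⟨k, hkfin, hgk⟩ := Set.mem_iUnion₂.mp (hfin hg)
    obtain ⟨v, hvV, hvg⟩ := Set.mem_smul_set.mp hgk
    rw [smul_eq_mul] at hvg
    have hvK : v ∈ K := by
      have : v = (k₀ : G) * (k : G)⁻¹ * g := by
        rw [← hvg]; group
      rw [this]
      exact K.mul_mem (K.mul_mem k₀.2 (K.inv_mem k.2)) hg
    have hvC : v ∈ C ^ m := hKV v hvK hvV
    have hmem : g ∈ C ^ (mfun k) * C ^ m * C ^ m := by
      rw [← hvg]
      exact Set.mul_mem_mul (Set.mul_mem_mul (hmfun k) (hpowinv m _ hk₀C)) hvC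
    have heq : C ^ (mfun k) * C ^ m * C ^ m = C ^ (mfun k + m + m) := by
      rw [pow_add, pow_add]
    rw [heq] at hmem
    exact hCmono _ _ (Nat.add_le_add_right (Nat.add_le_add_right (Finset.le_sup hkfin) m) m) hmem
  obtain ⟨L, hL⟩ := hKsub
  -- the presentation of the quotient
  refine ⟨max n L,
    (ρh '' R) ∪ (ρh '' {x | ∃ w : List (S × Bool),
      FreeGroup.mk w = x ∧ w.length ≤ L ∧ φ x ∈ K}), ?_, ?_, ?_⟩
  · rintro r (⟨x, hxR, rfl⟩ | ⟨x, ⟨w, hwx, hwl, -⟩, rfl⟩)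
    · obtain ⟨w, hwmk, hwn⟩ := hR x hxR
      refine ⟨w.map (fun p => (ρl p.1, p.2)), ?_, ?_⟩
      · rw [← hwmk]
        exact (FreeGroup.map.mk).symm
      · rw [List.length_map]
        exact hwn.trans (le_max_left n L)
    · refine ⟨w.map (fun p => (ρl p.1, p.2)), ?_, ?_⟩
      · rw [← hwx]
        exact (FreeGroup.map.mk).symm
      · rw [List.length_map]
        exact hwl.trans (le_max_right n L)
  · intro q
    obtain ⟨g, rfl⟩ := QuotientGroup.mk'_surjective K q
    obtain ⟨x, rfl⟩ := hsurj g
    exact ⟨ρh x, hcomm x⟩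
  · have hnorm : (MonoidHom.ker ψ).Normal := MonoidHom.normal_ker ψ
    apply le_antisymm
    · intro y hy
      show y ∈ Subgroup.normalClosure _
      have hy' : ψ y = 1 := hy
      set x := σh y with hx
      have hπφx : π (φ x) = 1 := by
        rw [← hcomm x, hx, hρσ y, hy']
      have hφxK : φ x ∈ K := by
        rwa [← QuotientGroup.ker_mk' K, MonoidHom.mem_ker]
      obtain ⟨w, hwl, hwφ⟩ := hball_word L (φ x) (hL hφxK)
      set u := FreeGroup.mk w with hu
      have hxu : x * u⁻¹ ∈ MonoidHom.ker φ := by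
        rw [MonoidHom.mem_ker, map_mul, map_inv, hwφ, mul_inv_cancel]
      rw [hker] at hxu
      set RQ : Set (FreeGroup T) := (ρh '' R) ∪ (ρh '' {x | ∃ w : List (S × Bool),
        FreeGroup.mk w = x ∧ w.length ≤ L ∧ φ x ∈ K}) with hRQ
      haveI : (Subgroup.comap ρh (Subgroup.normalClosure RQ)).Normal :=
        Subgroup.Normal.comap Subgroup.normalClosure_normal ρh
      have hle : Subgroup.normalClosure R ≤
          Subgroup.comap ρh (Subgroup.normalClosure RQ) := by
        apply Subgroup.normalClosure_le_normal
        intro r hr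
        exact Subgroup.subset_normalClosure (Or.inl (Set.mem_image_of_mem _ hr))
      have h1 : ρh (x * u⁻¹) ∈ Subgroup.normalClosure RQ := hle hxu
      rw [map_mul, map_inv, hx, hρσ y] at h1
      have h2 : ρh u ∈ Subgroup.normalClosure RQ := by
        apply Subgroup.subset_normalClosure
        refine Or.inr (Set.mem_image_of_mem _ ⟨w, rfl, hwl, ?_⟩)
        rw [hwφ]; exact hφxK
      have := mul_mem h1 h2
      rwa [inv_mul_cancel_right] at this
    · apply Subgroup.normalClosure_le_normal
      rintro r (⟨x, hx, rfl⟩ | ⟨x, ⟨w, hwx, hwl, hxK⟩, rfl⟩)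
      · have hxker : φ x = 1 := by
          have : x ∈ MonoidHom.ker φ := by
            rw [hker]; exact Subgroup.subset_normalClosure hx
          exact this
        show ψ (ρh x) = 1
        rw [hcomm x, hxker, map_one]
      · show ψ (ρh x) = 1
        rw [hcomm x, ← MonoidHom.mem_ker, QuotientGroup.ker_mk']
        exact hxK

end Forward

theorem of_eq_mk' {α : Type*} (a : α) : FreeGroup.of a = FreeGroup.mk [(a, true)] := rfl

theorem inv_of_eq_mk' {α : Type*} (a : α) :
    (FreeGroup.of a)⁻¹ = FreeGroup.mk [(a, false)] := by
  rw [of_eq_mk', FreeGroup.inv_mk]; rfl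

theorem mk3 {α : Type*} (a b c : α) :
    FreeGroup.of a * FreeGroup.of b * (FreeGroup.of c)⁻¹
      = FreeGroup.mk [(a, true), (b, true), (c, false)] := by
  rw [of_eq_mk' a, of_eq_mk' b, inv_of_eq_mk' c, FreeGroup.mul_mk, FreeGroup.mul_mk]
  rfl

theorem mk4 {α : Type*} (a b c : α) :
    FreeGroup.of a * FreeGroup.of b * (FreeGroup.of a)⁻¹ * (FreeGroup.of c)⁻¹
      = FreeGroup.mk [(a, true), (b, true), (a, false), (c, false)] := by
  rw [inv_of_eq_mk' a, inv_of_eq_mk' c, of_eq_mk' a, of_eq_mk' b,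
    FreeGroup.mul_mk, FreeGroup.mul_mk, FreeGroup.mul_mk]
  rfl

section Backward

variable {G : Type*} [Group G] [TopologicalSpace G] [IsTopologicalGroup G] [T2Space G]

theorem backward (K : Subgroup G) [K.Normal] (hK : IsCompact (K : Set G)) :
    CompactlyPresented (G ⧸ K) → CompactlyPresented G := by
  classical
  rintro ⟨T, hT, n, RQ, hRQ, hsurjQ, hkerQ⟩
  let π : G →* G ⧸ K := QuotientGroup.mk' K
  have hπcoe : (π : G → G ⧸ K) = QuotientGroup.mk := rfl
  -- compact preimage via properness
  have hproper : IsProperMap (QuotientGroup.mk : G → G ⧸ K) := by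
    rw [isProperMap_iff_isClosedMap_and_compact_fibers]
    refine ⟨QuotientGroup.continuous_mk, QuotientGroup.isClosedMap_coe hK, fun q => ?_⟩
    obtain ⟨g, rfl⟩ := QuotientGroup.mk_surjective q
    have heq : (QuotientGroup.mk : G → G ⧸ K) ⁻¹' {(g : G ⧸ K)} = g • (K : Set G) := by
      ext x
      simp only [Set.mem_preimage, Set.mem_singleton_iff, Set.mem_smul_set_iff_inv_smul_mem]
      rw [eq_comm, QuotientGroup.eq]
      rfl
    rw [heq]
    exact hK.smul g
  have hpre : IsCompact ((π : G → G ⧸ K) ⁻¹' T) := by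
    rw [hπcoe]; exact hproper.isCompact_preimage hT
  set S : Set G := ((π : G → G ⧸ K) ⁻¹' T) ∪ (K : Set G) with hSdef
  refine ⟨S, hpre.union hK, ?_⟩
  -- the homomorphisms
  let φ : FreeGroup S →* G := FreeGroup.lift (fun s : S => (s : G))
  let ψ : FreeGroup T →* G ⧸ K := FreeGroup.lift (fun t : T => (t : G ⧸ K))
  have hφof : ∀ s : S, φ (FreeGroup.of s) = (s : G) := fun s => FreeGroup.lift_apply_of
  have hψof : ∀ t : T, ψ (FreeGroup.of t) = (t : G ⧸ K) := fun t => FreeGroup.lift_apply_of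
  let ρl : S → FreeGroup T := fun s =>
    if h : π (s : G) ∈ T then FreeGroup.of ⟨π (s : G), h⟩ else 1
  let ρh : FreeGroup S →* FreeGroup T := FreeGroup.lift ρl
  have hτ : ∀ t : T, ∃ s : S, π (s : G) = (t : G ⧸ K) := by
    intro t
    obtain ⟨g, hg⟩ := QuotientGroup.mk_surjective (t : G ⧸ K)
    have : g ∈ S := Or.inl (by rw [Set.mem_preimage, hπcoe, hg]; exact t.2)
    exact ⟨⟨g, this⟩, hg⟩
  choose τl hτl using hτ
  let σh : FreeGroup T →* FreeGroup S := FreeGroup.map τl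
  have hρσ : ∀ y : FreeGroup T, ρh (σh y) = y := by
    intro y
    have h : ρh.comp σh = MonoidHom.id _ := by
      refine FreeGroup.ext_hom _ _ fun t => ?_
      show ρh (FreeGroup.map τl (FreeGroup.of t)) = FreeGroup.of t
      rw [FreeGroup.map.of]
      show FreeGroup.lift ρl (FreeGroup.of (τl t)) = FreeGroup.of t
      rw [FreeGroup.lift_apply_of]
      have hmem : π ((τl t : S) : G) ∈ T := by rw [hτl t]; exact t.2
      show (if h : π ((τl t : S) : G) ∈ T then FreeGroup.of ⟨π ((τl t : S) : G), h⟩ else 1)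
        = FreeGroup.of t
      rw [dif_pos hmem]
      exact congrArg FreeGroup.of (Subtype.ext (hτl t))
    simpa using DFunLike.congr_fun h y
  have hcommQ : ∀ x : FreeGroup S, ψ (ρh x) = π (φ x) := by
    intro x
    have h : ψ.comp ρh = π.comp φ := by
      refine FreeGroup.ext_hom _ _ fun s => ?_
      show ψ (FreeGroup.lift ρl (FreeGroup.of s)) = π (φ (FreeGroup.of s))
      rw [FreeGroup.lift_apply_of, hφof]
      by_cases h : π (s : G) ∈ T
      · show ψ (if h : π (s : G) ∈ T then FreeGroup.of ⟨π (s : G), h⟩ else 1) = π (s : G)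
        rw [dif_pos h, hψof]
      · show ψ (if h : π (s : G) ∈ T then FreeGroup.of ⟨π (s : G), h⟩ else 1) = π (s : G)
        rw [dif_neg h, map_one]
        have hsK : (s : G) ∈ K := by
          rcases s.2 with hs | hs
          · exact absurd (by exact hs) h
          · exact hs
        rw [eq_comm, ← MonoidHom.mem_ker, QuotientGroup.ker_mk']
        exact hsK
    exact DFunLike.congr_fun h x
  -- the K-letters
  let κ : G → S := fun g => if h : g ∈ K then ⟨g, Or.inr h⟩ else ⟨1, Or.inr K.one_mem⟩
  have hκ : ∀ g ∈ K, ((κ g : S) : G) = g := fun g h => by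
    have hh : κ g = (⟨g, Or.inr h⟩ : S) := dif_pos h
    rw [hh]
  -- relators
  let Ra : Set (FreeGroup S) :=
    (fun r => σh r * (FreeGroup.of (κ (φ (σh r))))⁻¹) '' RQ
  let Rb : Set (FreeGroup S) := {x | ∃ k₁ ∈ K, ∃ k₂ ∈ K,
    x = FreeGroup.of (κ k₁) * FreeGroup.of (κ k₂) * (FreeGroup.of (κ (k₁ * k₂)))⁻¹}
  let Rc : Set (FreeGroup S) := {x | ∃ (s : S), ∃ k ∈ K,
    x = FreeGroup.of s * FreeGroup.of (κ k) * (FreeGroup.of s)⁻¹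
      * (FreeGroup.of (κ ((s : G) * k * (s : G)⁻¹)))⁻¹}
  let Rd : Set (FreeGroup S) := {x | ∃ (s₁ s₂ : S), ∃ k ∈ K, (s₁ : G) * k = (s₂ : G) ∧
    x = FreeGroup.of s₁ * FreeGroup.of (κ k) * (FreeGroup.of s₂)⁻¹}
  let RG : Set (FreeGroup S) := Ra ∪ Rb ∪ Rc ∪ Rd
  let N : Subgroup (FreeGroup S) := Subgroup.normalClosure RG
  let μ : FreeGroup S →* FreeGroup S ⧸ N := QuotientGroup.mk' N
  have hrel : ∀ x ∈ RG, μ x = 1 := fun x hx =>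
    (QuotientGroup.eq_one_iff x).mpr (Subgroup.subset_normalClosure hx)
  -- the image of K in the quotient of the free group
  let e : G → FreeGroup S ⧸ N := fun g => μ (FreeGroup.of (κ g))
  have hb : ∀ k₁ ∈ K, ∀ k₂ ∈ K, e k₁ * e k₂ = e (k₁ * k₂) := by
    intro k₁ h₁ k₂ h₂
    have h0 := hrel _ (Or.inl (Or.inl (Or.inr ⟨k₁, h₁, k₂, h₂, rfl⟩)))
    simp only [map_mul, map_inv] at h0
    rw [mul_inv_eq_one] at h0
    exact h0
  have hone : e 1 = 1 := by
    have := hb 1 K.one_mem 1 K.one_mem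
    rw [mul_one] at this
    exact mul_eq_right.mp this
  have hinv : ∀ k ∈ K, e k⁻¹ = (e k)⁻¹ := by
    intro k hk
    refine eq_inv_of_mul_eq_one_left ?_
    rw [hb k⁻¹ (K.inv_mem hk) k hk, inv_mul_cancel, hone]
  -- conjugation lemma
  have hφofS : ∀ s : S, φ (FreeGroup.of s) = (s : G) := hφof
  have hconj : ∀ x : FreeGroup S, ∀ k ∈ K, μ x * e k * (μ x)⁻¹ = e (φ x * k * (φ x)⁻¹) := by
    intro x
    induction x using FreeGroup.induction_on with
    | C1 =>
      intro k hk
      simp only [map_one, one_mul, inv_one, mul_one]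
    | of s =>
      show ∀ k ∈ K, μ (FreeGroup.of s) * e k * (μ (FreeGroup.of s))⁻¹
        = e (φ (FreeGroup.of s) * k * (φ (FreeGroup.of s))⁻¹)
      intro k hk
      have h0 := hrel _ (Or.inl (Or.inr ⟨s, k, hk, rfl⟩))
      simp only [map_mul, map_inv] at h0
      rw [mul_inv_eq_one] at h0
      rw [hφofS s]
      exact h0
    | inv_of s ih =>
      have ih' : ∀ k ∈ K, μ (FreeGroup.of s) * e k * (μ (FreeGroup.of s))⁻¹
          = e ((s : G) * k * (s : G)⁻¹) := by
        intro k hk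
        have h2 : μ (FreeGroup.of s) * e k * (μ (FreeGroup.of s))⁻¹
            = e (φ (FreeGroup.of s) * k * (φ (FreeGroup.of s))⁻¹) := ih k hk
        rw [hφofS s] at h2
        exact h2
      show ∀ k ∈ K, μ ((FreeGroup.of s)⁻¹) * e k * (μ ((FreeGroup.of s)⁻¹))⁻¹
        = e (φ ((FreeGroup.of s)⁻¹) * k * (φ ((FreeGroup.of s)⁻¹))⁻¹)
      intro k hk
      simp only [map_inv]
      rw [hφofS s]
      have hk' : (s : G)⁻¹ * k * (s : G) ∈ K := by
        have := (inferInstance : K.Normal).conj_mem k hk (s : G)⁻¹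
        simpa using this
      have h2 := ih' _ hk'
      have harg : (s : G) * ((s : G)⁻¹ * k * (s : G)) * (s : G)⁻¹ = k := by group
      rw [harg] at h2
      have harg2 : (s : G)⁻¹ * k * ((s : G)⁻¹)⁻¹ = (s : G)⁻¹ * k * (s : G) := by group
      rw [harg2, ← h2]
      group
    | mul x y ihx ihy =>
      intro k hk
      have hky : φ y * k * (φ y)⁻¹ ∈ K :=
        (inferInstance : K.Normal).conj_mem k hk (φ y)
      simp only [map_mul]
      have h1 : μ x * μ y * e k * (μ x * μ y)⁻¹
          = μ x * (μ y * e k * (μ y)⁻¹) * (μ x)⁻¹ := by group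
      rw [h1, ihy k hk, ihx _ hky]
      exact congrArg e (by group)
  -- membership facts
  have hKmem : ∀ y : FreeGroup T, ψ y = 1 → φ (σh y) ∈ K := by
    intro y hy
    have h := hcommQ (σh y)
    rw [hρσ y, hy] at h
    exact (QuotientGroup.eq_one_iff _).mp h.symm
  have hRQker : ∀ r ∈ RQ, ψ r = 1 := by
    intro r hr
    have : r ∈ MonoidHom.ker ψ := by
      rw [hkerQ]
      exact Subgroup.subset_normalClosure hr
    exact this
  -- the A homomorphism
  let σρ : FreeGroup S →* FreeGroup S := σh.comp ρh
  have hAmemK : ∀ x : FreeGroup S, (φ (σρ x))⁻¹ * φ x ∈ K := by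
    intro x
    have h1 : π (φ (σh (ρh x))) = π (φ x) := by
      rw [← hcommQ (σh (ρh x)), hρσ (ρh x)]
      exact hcommQ x
    refine (QuotientGroup.eq_one_iff _).mp ?_
    show π ((φ (σh (ρh x)))⁻¹ * φ x) = 1
    rw [map_mul, map_inv, h1, inv_mul_cancel]
  let Af : FreeGroup S → FreeGroup S ⧸ N := fun x => μ (σρ x) * e ((φ (σρ x))⁻¹ * φ x)
  have hAmul : ∀ x y : FreeGroup S, Af (x * y) = Af x * Af y := by
    intro x y
    show μ (σρ (x * y)) * e ((φ (σρ (x * y)))⁻¹ * φ (x * y))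
      = (μ (σρ x) * e ((φ (σρ x))⁻¹ * φ x)) * (μ (σρ y) * e ((φ (σρ y))⁻¹ * φ y))
    have ha := hAmemK x
    have hb' := hAmemK y
    -- move e-part past μ (σρ y)
    have hstep : e ((φ (σρ x))⁻¹ * φ x) * μ (σρ y)
        = μ (σρ y) * e ((φ (σρ y))⁻¹ * ((φ (σρ x))⁻¹ * φ x) * φ (σρ y)) := by
      have h := hconj (σρ y)⁻¹ _ ha
      simp only [map_inv, inv_inv] at h
      have h' : (μ (σρ y))⁻¹ * e ((φ (σρ x))⁻¹ * φ x) * μ (σρ y)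
          = e ((φ (σρ y))⁻¹ * ((φ (σρ x))⁻¹ * φ x) * φ (σρ y)) := by
        convert h using 2
        exact (inv_inv (μ (σρ y))).symm
      rw [← h']
      group
    have hc : (φ (σρ y))⁻¹ * ((φ (σρ x))⁻¹ * φ x) * φ (σρ y) ∈ K := by
      have := (‹K.Normal› : K.Normal).conj_mem _ ha (φ (σρ y))⁻¹
      simpa using this
    symm
    calc (μ (σρ x) * e ((φ (σρ x))⁻¹ * φ x)) * (μ (σρ y) * e ((φ (σρ y))⁻¹ * φ y))
        = μ (σρ x) * (e ((φ (σρ x))⁻¹ * φ x) * μ (σρ y)) * e ((φ (σρ y))⁻¹ * φ y) := by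
          group
      _ = μ (σρ x) * (μ (σρ y) * e ((φ (σρ y))⁻¹ * ((φ (σρ x))⁻¹ * φ x) * φ (σρ y)))
            * e ((φ (σρ y))⁻¹ * φ y) := by rw [hstep]
      _ = (μ (σρ x) * μ (σρ y)) * (e ((φ (σρ y))⁻¹ * ((φ (σρ x))⁻¹ * φ x) * φ (σρ y))
            * e ((φ (σρ y))⁻¹ * φ y)) := by group
      _ = (μ (σρ x) * μ (σρ y)) * e (((φ (σρ y))⁻¹ * ((φ (σρ x))⁻¹ * φ x) * φ (σρ y))
            * ((φ (σρ y))⁻¹ * φ y)) := by rw [hb _ hc _ hb']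
      _ = μ (σρ (x * y)) * e ((φ (σρ (x * y)))⁻¹ * φ (x * y)) := by
          rw [map_mul σρ, map_mul μ, map_mul φ, map_mul φ]
          exact congrArg (fun z => μ (σρ x) * μ (σρ y) * e z) (by group)
  have hρofs : ∀ s : S, ρh (FreeGroup.of s) = ρl s := fun s => FreeGroup.lift_apply_of
  have hσof : ∀ t : T, σh (FreeGroup.of t) = FreeGroup.of (τl t) := fun t => FreeGroup.map.of
  have hA : ∀ x : FreeGroup S, Af x = μ x := by
    have h : MonoidHom.mk' Af hAmul = μ := by
      refine FreeGroup.ext_hom _ _ fun s => ?_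
      show Af (FreeGroup.of s) = μ (FreeGroup.of s)
      show μ (σh (ρh (FreeGroup.of s))) * e ((φ (σh (ρh (FreeGroup.of s))))⁻¹
        * φ (FreeGroup.of s)) = μ (FreeGroup.of s)
      by_cases h : π (s : G) ∈ T
      · have hρl : ρl s = FreeGroup.of ⟨π (s : G), h⟩ := dif_pos h
        rw [hρofs s, hρl, hσof, hφofS, hφofS]
        set s' : S := τl ⟨π (s : G), h⟩ with hs'
        have hk : (s' : G)⁻¹ * (s : G) ∈ K := by
          refine (QuotientGroup.eq_one_iff _).mp ?_
          show π ((s' : G)⁻¹ * (s : G)) = 1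
          rw [map_mul, map_inv]
          have hππ : π (s' : G) = π (s : G) := hτl ⟨π (s : G), h⟩
          rw [hππ, inv_mul_cancel]
        have hd := hrel _ (Or.inr ⟨s', s, (s' : G)⁻¹ * (s : G), hk,
          by rw [mul_inv_cancel_left], rfl⟩)
        simp only [map_mul, map_inv] at hd
        rw [mul_inv_eq_one] at hd
        exact hd
      · have hρl : ρl s = 1 := dif_neg h
        rw [hρofs s, hρl, map_one, map_one, map_one, one_mul, inv_one, one_mul, hφofS]
        have hsK : (s : G) ∈ K := by
          rcases s.2 with hs | hs
          · exact absurd (by exact hs) h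
          · exact hs
        show μ (FreeGroup.of (κ (s : G))) = μ (FreeGroup.of s)
        have hκs : κ ((s : G)) = s := Subtype.ext (hκ _ hsK)
        rw [hκs]
    intro x
    exact DFunLike.congr_fun h x
  -- elements of the normal closure of RQ
  have hP : ∀ y ∈ Subgroup.normalClosure RQ, μ (σh y) = e (φ (σh y)) := by
    intro y hy
    have hy' : y ∈ Subgroup.closure (Group.conjugatesOfSet RQ) := hy
    have hmemker : ∀ z : FreeGroup T, z ∈ Subgroup.closure (Group.conjugatesOfSet RQ) →
        ψ z = 1 := by
      intro z hz
      have : z ∈ MonoidHom.ker ψ := by rw [hkerQ]; exact hz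
      exact this
    refine Subgroup.closure_induction ?_ ?_ ?_ ?_ hy'
    · intro x hx
      obtain ⟨r, hrRQ, hconj_r⟩ := Group.mem_conjugatesOfSet_iff.mp hx
      obtain ⟨c, hc⟩ := isConj_iff.mp hconj_r
      have hra := hrel _ (Or.inl (Or.inl (Or.inl ⟨r, hrRQ, rfl⟩)))
      rw [map_mul, map_inv, mul_inv_eq_one] at hra
      have hrK : φ (σh r) ∈ K := hKmem r (hRQker r hrRQ)
      calc μ (σh x) = μ (σh (c * r * c⁻¹)) := by rw [← hc]
        _ = μ (σh c) * μ (σh r) * (μ (σh c))⁻¹ := by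
            simp only [map_mul, map_inv]
        _ = μ (σh c) * e (φ (σh r)) * (μ (σh c))⁻¹ := by rw [hra]
        _ = e (φ (σh c) * φ (σh r) * (φ (σh c))⁻¹) := hconj (σh c) _ hrK
        _ = e (φ (σh x)) := by
            rw [← hc]
            exact congrArg e (by simp only [map_mul, map_inv])
    · rw [map_one, map_one, map_one, hone]
    · intro x y hx hy ihx ihy
      have hxK : φ (σh x) ∈ K := hKmem x (hmemker x hx)
      have hyK : φ (σh y) ∈ K := hKmem y (hmemker y hy)
      simp only [map_mul]
      rw [ihx, ihy]
      exact hb _ hxK _ hyK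
    · intro x hx ihx
      have hxK : φ (σh x) ∈ K := hKmem x (hmemker x hx)
      simp only [map_inv]
      rw [ihx]
      exact (hinv _ hxK).symm
  -- now the presentation
  refine ⟨max (n + 1) 4, RG, ?_, ?_, ?_⟩
  · -- bounded words
    rintro r (((⟨r₀, hr₀, rfl⟩ | ⟨k₁, h₁, k₂, h₂, rfl⟩) | ⟨s, k, hk, rfl⟩) |
      ⟨s₁, s₂, k, hk, hs, rfl⟩)
    · obtain ⟨w, hwmk, hwn⟩ := hRQ r₀ hr₀
      refine ⟨w.map (fun p => (τl p.1, p.2)) ++ [(κ (φ (σh r₀)), false)], ?_, ?_⟩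
      · rw [← FreeGroup.mul_mk]
        have h1 : FreeGroup.mk (w.map (fun p => (τl p.1, p.2))) = σh r₀ := by
          rw [← hwmk]
          exact (FreeGroup.map.mk).symm
        rw [h1, ← inv_of_eq_mk']
      · rw [List.length_append, List.length_map, List.length_singleton]
        exact le_max_of_le_left (Nat.add_le_add_right hwn 1)
    · exact ⟨[(κ k₁, true), (κ k₂, true), (κ (k₁ * k₂), false)], (mk3 _ _ _).symm,
        le_max_of_le_right (by norm_num)⟩
    · exact ⟨[(s, true), (κ k, true), (s, false), (κ ((s : G) * k * (s : G)⁻¹), false)],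
        (mk4 _ _ _).symm, le_max_of_le_right (by norm_num)⟩
    · exact ⟨[(s₁, true), (κ k, true), (s₂, false)], (mk3 _ _ _).symm,
        le_max_of_le_right (by norm_num)⟩
  · -- surjectivity
    intro g
    obtain ⟨y, hy⟩ := hsurjQ (π g)
    have h1 : π (φ (σh y)) = π g := by
      have h := hcommQ (σh y)
      rw [hρσ y] at h
      rw [← h]
      exact hy
    have h2 : g * (φ (σh y))⁻¹ ∈ K := by
      refine (QuotientGroup.eq_one_iff _).mp ?_
      show π (g * (φ (σh y))⁻¹) = 1
      rw [map_mul, map_inv, h1, mul_inv_cancel]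
    refine ⟨FreeGroup.of (κ (g * (φ (σh y))⁻¹)) * σh y, ?_⟩
    show φ (FreeGroup.of (κ (g * (φ (σh y))⁻¹)) * σh y) = g
    rw [map_mul, hφof, hκ _ h2, inv_mul_cancel_right]
  · -- the kernel
    apply le_antisymm
    · intro w hw
      have hw1 : φ w = 1 := hw
      show w ∈ N
      refine (QuotientGroup.eq_one_iff w).mp ?_
      show μ w = 1
      rw [← hA w]
      show μ (σρ w) * e ((φ (σρ w))⁻¹ * φ w) = 1
      have hρwker : ψ (ρh w) = 1 := by rw [hcommQ w, hw1, map_one]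
      have hρwncl : ρh w ∈ Subgroup.normalClosure RQ := by
        rw [← hkerQ]
        exact hρwker
      have hPw : μ (σh (ρh w)) = e (φ (σh (ρh w))) := hP (ρh w) hρwncl
      have hwK : φ (σh (ρh w)) ∈ K := hKmem (ρh w) hρwker
      show μ (σh (ρh w)) * e ((φ (σh (ρh w)))⁻¹ * φ w) = 1
      rw [hw1, mul_one, hPw, hinv _ hwK, mul_inv_cancel]
    · apply Subgroup.normalClosure_le_normal
      rintro r (((⟨r₀, hr₀, rfl⟩ | ⟨k₁, h₁, k₂, h₂, rfl⟩) | ⟨s, k, hk, rfl⟩) |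
        ⟨s₁, s₂, k, hk, hs, rfl⟩)
      · have hrK : φ (σh r₀) ∈ K := hKmem r₀ (hRQker r₀ hr₀)
        show φ _ = 1
        rw [map_mul, map_inv, hφof, hκ _ hrK, mul_inv_cancel]
      · show φ _ = 1
        rw [map_mul, map_mul, map_inv, hφof, hφof, hφof, hκ _ h₁, hκ _ h₂,
          hκ _ (K.mul_mem h₁ h₂), mul_inv_cancel]
      · show φ _ = 1
        have hkc : (s : G) * k * (s : G)⁻¹ ∈ K := (‹K.Normal› : K.Normal).conj_mem k hk _
        rw [map_mul, map_mul, map_mul, map_inv, map_inv, hφof, hφof, hφof,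
          hκ _ hk, hκ _ hkc, mul_inv_cancel]
      · show φ _ = 1
        rw [map_mul, map_mul, map_inv, hφof, hφof, hφof, hκ _ hk, hs, mul_inv_cancel]

end Backward
end CPAux

/-- for a compact normal subgroup `K` of a Hausdorff topological group `G`, the
group `G` is compactly presented if and only if `G / K` is. -/
theorem compactlyPresented_iff_quotient_compact {G : Type*} [Group G] [TopologicalSpace G]
    [IsTopologicalGroup G] [T2Space G]
    (K : Subgroup G) [K.Normal] (hK : IsCompact (K : Set G)) :
    CompactlyPresented G ↔ CompactlyPresented (G ⧸ K) :=
  ⟨CPAux.forward K hK, CPAux.backward K hK⟩
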